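/- Every normal c-array of content (1,...,1,2) (l ones followed by one 2, so value l+1 occurs twice and values 1,...,l occur once) has its last two columns equal to (l+1, 1) and (l+1, y) for some y, and deleting the column (l+1, 1) gives a bijection with normal c-arrays of content (0, 1, ..., 1) on the values {2, ..., l+1}. In particular the number of normal c-arrays of content (1,...,1,2) equals the number of multilinear normal c-arrays on l values. -/

import Mathlib

/-- Tableaux are represented as lists of rows of positive integers.
`IsSSYT T` : rows weakly increasing, columns strictly increasing,
row lengths weakly decreasing, no empty rows (English notation). -/
def IsSSYT (T : List (List ℕ)) : Prop :=
  (∀ r ∈ T, List.Pairwise (· ≤ ·) r) ∧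
  (∀ (i j a b : ℕ), (T.getD i [])[j]? = some a → (T.getD (i+1) [])[j]? = some b → a < b) ∧
  (∀ i, (T.getD (i+1) []).length ≤ (T.getD i []).length) ∧
  [] ∉ T

/-- Schensted row insertion.  Returns the new tableau together with the
(0-based) index of the row in which a new box was added. -/
def rinsert : List (List ℕ) → ℕ → List (List ℕ) × ℕ
  | [], x => ([[x]], 0)
  | r :: rs, x =>
    match r.findIdx? (fun t => x < t) with
    | none => ((r ++ [x]) :: rs, 0)
    | some j =>
      let y := r.getD j 0
      let p := rinsert rs y
      ((r.set j x) :: p.1, p.2 + 1)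

/-- Reverse bumping through the rows above (given in reversed order). -/
def revBump : List (List ℕ) → ℕ → List (List ℕ) × ℕ
  | [], x => ([], x)
  | r :: rs, x =>
    let k := (r.takeWhile (· < x)).length
    if k = 0 then (r :: rs, x)
    else
      let y := r.getD (k - 1) 0
      let p := revBump rs y
      ((r.set (k - 1) x) :: p.1, p.2)

/-- Schensted deletion: remove the last box of row `i` and reverse-bump,
returning the new tableau and the ejected entry. -/
def schDelete (T : List (List ℕ)) (i : ℕ) : List (List ℕ) × ℕ :=
  let r := T.getD i []
  let x := r.getLastD 0
  let r' := r.dropLast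
  let p := revBump (T.take i).reverse x
  (p.1.reverse ++ (if r' = [] then ([] : List (List ℕ)) else [r']) ++ T.drop (i + 1), p.2)

/-- One step of `Carray2Dtableau`: insert `b` and append `a` at the end of
the next row. -/
def c2dStep (T : List (List ℕ)) (p : ℕ × ℕ) : List (List ℕ) :=
  let q := rinsert T p.2
  if q.2 + 1 < q.1.length then q.1.set (q.2 + 1) ((q.1.getD (q.2 + 1) []) ++ [p.1])
  else q.1 ++ [[p.1]]

/-- The map `Carray2Dtableau` from c-arrays (lists of columns `(aᵢ, bᵢ)`) to
tableaux of double shape. -/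
def c2d (S : List (ℕ × ℕ)) : List (List ℕ) := S.foldl c2dStep []

/-- One step of `Dtableau2Carray`: extract the maximal entry `x` (occurrence of
maximal column, at the end of row `i`), apply `schDelete` at row `i` ejecting `y`,
and remove the corresponding entry of row `i-1`. -/
def d2cStep (T : List (List ℕ)) : List (List ℕ) × (ℕ × ℕ) :=
  let x := T.flatten.foldr max 0
  let cand := (List.range T.length).filter (fun i => (T.getD i []).getLastD 0 = x)
  let i := cand.foldl (fun acc i =>
      if (T.getD acc []).length < (T.getD i []).length then i else acc) 0
  let j := (T.getD i []).length - 1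
  let p := schDelete T i
  let T2 := p.1.set (i - 1) ((p.1.getD (i - 1) []).eraseIdx j)
  (T2.filter (fun r => r ≠ []), (x, p.2))

def d2cAux : ℕ → List (List ℕ) → List (ℕ × ℕ)
  | 0, _ => []
  | n + 1, T =>
    if T = [] then []
    else
      let p := d2cStep T
      d2cAux n p.1 ++ [p.2]

/-- The map `Dtableau2Carray`. -/
def d2c (T : List (List ℕ)) : List (ℕ × ℕ) := d2cAux T.flatten.length T

/-- Content of a two-rowed array: multiplicity of each value among all entries. -/
def cntA (S : List (ℕ × ℕ)) (v : ℕ) : ℕ := (S.map Prod.fst ++ S.map Prod.snd).count v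

/-- Content of a tableau. -/
def cntT (T : List (List ℕ)) (v : ℕ) : ℕ := T.flatten.count v

/-- A c-array: each column `(aᵢ, bᵢ)` satisfies `bᵢ < aᵢ` and the columns are
weakly increasing in the lexicographic order. -/
def IsCArray (S : List (ℕ × ℕ)) : Prop :=
  (∀ p ∈ S, p.2 < p.1) ∧
  List.Chain' (fun p q : ℕ × ℕ => p.1 < q.1 ∨ (p.1 = q.1 ∧ p.2 ≤ q.2)) S

/-- Normality: every value occurs at most twice, and the bottom row contains no
weakly increasing subsequence of length 3. -/
def IsNormal (S : List (ℕ × ℕ)) : Prop :=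
  (∀ v, cntA S v ≤ 2) ∧
  ∀ t : List ℕ, t.Sublist (S.map Prod.snd) → t.Pairwise (· ≤ ·) → t.length ≤ 2

/-- A double shape: each row length is repeated an even number of times. -/
def IsDoubleShape (T : List (List ℕ)) : Prop :=
  ∃ L : List ℕ, T.map List.length = L.flatMap (fun a => [a, a])

/-- Content `(1, …, 1, 2)`: the values `1, …, l` occur once and `l+1` twice. -/
def contentL2 (l v : ℕ) : ℕ :=
  if 1 ≤ v ∧ v ≤ l then 1 else if v = l + 1 then 2 else 0

open List

abbrev lexR (p q : ℕ × ℕ) : Prop := p.1 < q.1 ∨ (p.1 = q.1 ∧ p.2 ≤ q.2)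

instance lexR.isTrans : IsTrans (ℕ × ℕ) lexR := ⟨fun _ _ _ h1 h2 => by omega⟩

lemma cntA_append (A B : List (ℕ × ℕ)) (v : ℕ) :
    cntA (A ++ B) v = cntA A v + cntA B v := by
  simp [cntA, count_append]; omega

lemma mem_top_pos {S : List (ℕ × ℕ)} {v : ℕ} (h : v ∈ S.map Prod.fst) : 1 ≤ cntA S v :=
  List.count_pos_iff.2 (mem_append_left _ h)

lemma mem_bot_pos {S : List (ℕ × ℕ)} {v : ℕ} (h : v ∈ S.map Prod.snd) : 1 ≤ cntA S v :=
  List.count_pos_iff.2 (mem_append_right _ h)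

lemma cntA_split (S : List (ℕ × ℕ)) (v : ℕ) :
    cntA S v = (S.map Prod.fst).count v + (S.map Prod.snd).count v := by
  simp [cntA, count_append]

lemma sorted_suffix {x : ℕ} : ∀ {t : List ℕ} {n : ℕ}, t.Pairwise (· ≤ ·) → (∀ a ∈ t, a ≤ x) →
    t.count x = n → ∃ t₀, t = t₀ ++ replicate n x ∧ x ∉ t₀ := by
  intro t
  induction t with
  | nil => intro n _ _ hc; simp at hc; exact ⟨[], by simp [← hc], by simp⟩
  | cons a r ih =>
    intro n hs hle hc
    by_cases hax : a = x
    · subst hax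
      have hall : ∀ b ∈ r, b = a :=
        fun b hb => le_antisymm (hle b (mem_cons_of_mem _ hb)) ((pairwise_cons.1 hs).1 b hb)
      have hr : r = replicate r.length a := eq_replicate_of_mem hall
      have hn : n = r.length + 1 := by
        rw [← hc, count_cons_self, hr, count_replicate]
        simp
      refine ⟨[], ?_, by simp⟩
      rw [hn, nil_append, replicate_succ]
      exact congrArg _ hr
    · have hc' : r.count x = n := by
        rw [← hc, count_cons]
        simp [hax, Ne.symm hax]
      obtain ⟨t₀, ht, hx⟩ := ih (pairwise_cons.1 hs).2 (fun b hb => hle b (mem_cons_of_mem _ hb)) hc'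
      refine ⟨a :: t₀, by simp [ht], ?_⟩
      simp only [mem_cons, not_or]
      exact ⟨fun h => hax h.symm, hx⟩

lemma top_sorted {S : List (ℕ × ℕ)} (h2 : List.Chain' lexR S) :
    (S.map Prod.fst).Pairwise (· ≤ ·) :=
  pairwise_map.2 ((isChain_iff_pairwise.1 h2).imp (fun h => by omega))

lemma erase_penult (A : List (ℕ × ℕ)) (p q : ℕ × ℕ) :
    (A ++ [p, q]).eraseIdx ((A ++ [p, q]).length - 2) = A ++ [q] := by
  have h : (A ++ [p, q]).length - 2 = A.length := by simp
  rw [h, eraseIdx_append_of_length_le (le_refl _)]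
  simp

lemma count_map_sub {L : List ℕ} (h : ∀ x ∈ L, 1 ≤ x) (v : ℕ) :
    (L.map (· - 1)).count v = L.count (v + 1) := by
  induction L with
  | nil => simp
  | cons a r ih =>
    have ha : 1 ≤ a := h a (by simp)
    rw [map_cons, count_cons, count_cons, ih (fun x hx => h x (by simp [hx]))]
    simp only [beq_iff_eq]
    split_ifs <;> omega

lemma count_map_succ (L : List ℕ) (v : ℕ) :
    (L.map (· + 1)).count v = if v = 0 then 0 else L.count (v - 1) := by
  rcases v with _ | w
  · simp [count_eq_zero]
  · simp only [Nat.succ_ne_zero, if_false, Nat.add_sub_cancel]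
    exact List.count_map_of_injective L (· + 1) (fun a b hab => by simpa using hab) w

lemma src_struct {l : ℕ} (hl : 1 ≤ l) {S : List (ℕ × ℕ)}
    (hCA : IsCArray S) (hN : IsNormal S) (hc : ∀ v, cntA S v = contentL2 l v) :
    ∃ y S₀, 1 ≤ y ∧ S = S₀ ++ [(l + 1, 1), (l + 1, y)] := by
  obtain ⟨hba, hch⟩ := hCA
  -- 0 is not an entry
  have h0 : cntA S 0 = 0 := by rw [hc]; simp [contentL2]
  have h0t : (0 : ℕ) ∉ S.map Prod.fst := fun h => by have := mem_top_pos h; omega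
  have h0b : (0 : ℕ) ∉ S.map Prod.snd := fun h => by have := mem_bot_pos h; omega
  -- entries are ≤ l+1
  have hubt : ∀ a ∈ S.map Prod.fst, a ≤ l + 1 := by
    intro a ha
    by_contra hgt
    have h1 := mem_top_pos ha
    rw [hc] at h1
    simp only [contentL2] at h1
    split_ifs at h1 <;> omega
  -- l+1 is not in the bottom row
  have hlb : (l + 1 : ℕ) ∉ S.map Prod.snd := by
    intro h
    obtain ⟨p, hp, hp2⟩ := mem_map.1 h
    have h1 : p.1 ∈ S.map Prod.fst := mem_map.2 ⟨p, hp, rfl⟩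
    have h2 := hubt _ h1
    have := hba p hp
    omega
  -- count of l+1 in the top row is 2
  have hcl : cntA S (l + 1) = 2 := by rw [hc]; simp [contentL2]
  have htopc : (S.map Prod.fst).count (l + 1) = 2 := by
    have := cntA_split S (l + 1)
    rw [count_eq_zero.2 hlb] at this
    omega
  obtain ⟨t₀, htop, hnotin⟩ := sorted_suffix (top_sorted hch) hubt htopc
  rw [show replicate 2 (l+1) = [l+1, l+1] from rfl] at htop
  rw [map_eq_append_iff] at htop
  obtain ⟨S₀, S₂, rfl, hS₀, hS₂⟩ := htop
  -- S₂ = [p, q]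
  obtain ⟨p, q, rfl⟩ : ∃ p q, S₂ = [p, q] := by
    cases S₂ with
    | nil => simp at hS₂
    | cons p S₃ =>
      cases S₃ with
      | nil => simp at hS₂
      | cons q S₄ =>
        cases S₄ with
        | nil => exact ⟨p, q, rfl⟩
        | cons r S₅ => simp at hS₂
  simp only [map_cons, map_nil, cons.injEq, and_true] at hS₂
  obtain ⟨hp1, hq1⟩ := hS₂
  -- the chain relation between p and q
  have hpq : lexR p q := by
    have := (isChain_append.1 hch).2.1
    exact (isChain_cons_cons.1 this).1
  have hb12 : p.2 ≤ q.2 := by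
    rcases hpq with h | ⟨_, h⟩ <;> omega
  -- p.2 and q.2 are nonzero
  have hp2pos : 1 ≤ p.2 := by
    rcases Nat.eq_zero_or_pos p.2 with h | h
    · exact absurd (mem_map.2 ⟨p, by simp, h⟩) h0b
    · exact h
  have hq2pos : 1 ≤ q.2 := by omega
  -- count of 1
  have hone : cntA (S₀ ++ [p, q]) 1 = 1 := by rw [hc]; simp [contentL2, hl]
  have h1t : (1 : ℕ) ∉ (S₀ ++ [p, q]).map Prod.fst := by
    intro h
    obtain ⟨r, hr, hr1⟩ := mem_map.1 h
    have := hba r hr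
    have : r.2 = 0 := by omega
    exact h0b (mem_map.2 ⟨r, hr, this⟩)
  have h1bot : ((S₀ ++ [p, q]).map Prod.snd).count 1 = 1 := by
    have := cntA_split (S₀ ++ [p, q]) 1
    rw [count_eq_zero.2 h1t] at this
    omega
  -- 1 is not in the bottom row of S₀
  have h1S₀ : (1 : ℕ) ∉ S₀.map Prod.snd := by
    intro h
    have hsub : [1, p.2, q.2].Sublist ((S₀ ++ [p, q]).map Prod.snd) := by
      rw [map_append]
      have e1 : [(1 : ℕ)] <+ S₀.map Prod.snd := singleton_sublist.2 h
      have e2 : [p.2, q.2] <+ [p, q].map Prod.snd := by simp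
      exact e1.append e2
    have hsort : ([1, p.2, q.2] : List ℕ).Pairwise (· ≤ ·) := by
      simp [pairwise_cons]
      omega
    have := hN.2 _ hsub hsort
    simp at this
  -- so 1 = p.2 (or q.2, excluded)
  have h1mem : (1 : ℕ) ∈ (S₀ ++ [p, q]).map Prod.snd := by
    by_contra h
    rw [count_eq_zero.2 h] at h1bot
    omega
  have hp21 : p.2 = 1 := by
    rw [map_append] at h1mem
    rcases mem_append.1 h1mem with h | h
    · exact absurd h h1S₀
    · simp only [map_cons, map_nil, mem_cons, not_mem_nil, or_false, mem_singleton] at h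
      rcases h with h | h
      · omega
      · -- q.2 = 1, then p.2 = 1, count ≥ 2, contradiction
        exfalso
        have hp21 : p.2 = 1 := by omega
        have : ((S₀ ++ [p, q]).map Prod.snd).count 1 ≥ 2 := by
          rw [map_append, count_append]
          have : ([p, q].map Prod.snd).count 1 = 2 := by
            simp [count_cons, hp21, ← h]
          omega
        omega
  refine ⟨q.2, S₀, hq2pos, ?_⟩
  have hp : p = (l + 1, 1) := Prod.ext hp1 hp21
  have hq : q = (l + 1, q.2) := Prod.ext hq1 rfl
  rw [hp, ← hq]

lemma tgt_struct {l : ℕ} (hl : 1 ≤ l) {T : List (ℕ × ℕ)}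
    (hCA : IsCArray T) (hc : ∀ v, cntA T v = if 2 ≤ v ∧ v ≤ l + 1 then 1 else 0) :
    ∃ y T₀, 2 ≤ y ∧ y ≤ l ∧ T = T₀ ++ [(l + 1, y)] ∧ (l + 1) ∉ T₀.map Prod.fst := by
  obtain ⟨hba, hch⟩ := hCA
  have hlow : ∀ a, a < 2 → a ∉ T.map Prod.fst ++ T.map Prod.snd := by
    intro a ha h
    have h1 : 1 ≤ cntA T a := List.count_pos_iff.2 h
    rw [hc] at h1
    split_ifs at h1 <;> omega
  have hubt : ∀ a ∈ T.map Prod.fst, a ≤ l + 1 := by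
    intro a ha
    by_contra hgt
    have h1 := mem_top_pos ha
    rw [hc] at h1
    split_ifs at h1 <;> omega
  have hubb : ∀ a ∈ T.map Prod.snd, a ≤ l + 1 := by
    intro a ha
    by_contra hgt
    have h1 := mem_bot_pos ha
    rw [hc] at h1
    split_ifs at h1 <;> omega
  have hlb : (l + 1 : ℕ) ∉ T.map Prod.snd := by
    intro h
    obtain ⟨p, hp, hp2⟩ := mem_map.1 h
    have h1 : p.1 ∈ T.map Prod.fst := mem_map.2 ⟨p, hp, rfl⟩
    have h2 := hubt _ h1
    have := hba p hp
    omega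
  have hcl : cntA T (l + 1) = 1 := by rw [hc]; split_ifs <;> omega
  have htopc : (T.map Prod.fst).count (l + 1) = 1 := by
    have := cntA_split T (l + 1)
    rw [count_eq_zero.2 hlb] at this
    omega
  obtain ⟨t₀, htop, hnotin⟩ := sorted_suffix (top_sorted hch) hubt htopc
  rw [show replicate 1 (l+1) = [l+1] from rfl] at htop
  rw [map_eq_append_iff] at htop
  obtain ⟨T₀, T₂, rfl, hT₀, hT₂⟩ := htop
  obtain ⟨q, rfl⟩ : ∃ q, T₂ = [q] := by
    cases T₂ with
    | nil => simp at hT₂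
    | cons q T₃ =>
      cases T₃ with
      | nil => exact ⟨q, rfl⟩
      | cons r T₄ => simp at hT₂
  simp only [map_cons, map_nil, cons.injEq, and_true] at hT₂
  have hq2 : q.2 ∈ (T₀ ++ [q]).map Prod.snd := mem_map.2 ⟨q, by simp, rfl⟩
  have hy2 : 2 ≤ q.2 := by
    by_contra h
    exact hlow q.2 (by omega) (mem_append_right _ hq2)
  have hyl : q.2 ≤ l := by
    have h1 := hubb _ hq2
    have : q.2 ≠ l + 1 := fun h => hlb (h ▸ hq2)
    omega
  refine ⟨q.2, T₀, hy2, hyl, ?_, by rw [hT₀]; exact hnotin⟩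
  have : q = (l + 1, q.2) := Prod.ext hT₂ rfl
  rw [← this]

lemma cntA_pair (a b c d v : ℕ) : cntA [(a,b),(c,d)] v =
    (if v = a then 1 else 0) + (if v = c then 1 else 0) +
    ((if v = b then 1 else 0) + (if v = d then 1 else 0)) := by
  simp [cntA, count_cons, count_nil, beq_iff_eq]
  split_ifs <;> omega

lemma cntA_single (a b v : ℕ) : cntA [(a,b)] v =
    (if v = a then 1 else 0) + (if v = b then 1 else 0) := by
  simp [cntA, count_cons, count_nil, beq_iff_eq]
  split_ifs <;> omega

lemma bij1 (l : ℕ) (hl : 1 ≤ l) :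
    Set.BijOn (fun S : List (ℕ × ℕ) => S.eraseIdx (S.length - 2))
      {S | IsCArray S ∧ IsNormal S ∧ (∀ v, cntA S v = contentL2 l v)}
      {S | IsCArray S ∧ IsNormal S ∧
        (∀ v, cntA S v = if 2 ≤ v ∧ v ≤ l + 1 then 1 else 0)} := by
  refine ⟨?_, ?_, ?_⟩
  · -- MapsTo
    intro S hS
    obtain ⟨hCA, hN, hc⟩ := hS
    obtain ⟨y, S₀, hy, rfl⟩ := src_struct hl hCA hN hc
    simp only [Set.mem_setOf_eq]
    rw [erase_penult]
    have hsub : (S₀ ++ [(l+1,y)]) <+ S₀ ++ [(l+1,1),(l+1,y)] :=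
      (Sublist.refl S₀).append ((Sublist.refl [(l+1,y)]).cons _)
    have hcnt : ∀ v, cntA (S₀ ++ [(l+1,y)]) v = if 2 ≤ v ∧ v ≤ l + 1 then 1 else 0 := by
      intro v
      have hv := hc v
      rw [cntA_append, cntA_pair] at hv
      rw [cntA_append, cntA_single]
      simp only [contentL2] at hv
      split_ifs at hv ⊢ <;> omega
    refine ⟨⟨fun p hp => hCA.1 p (hsub.subset hp), hCA.2.sublist hsub⟩,
      ⟨fun v => by rw [hcnt v]; split_ifs <;> omega,
       fun t ht hs => hN.2 t (ht.trans (hsub.map Prod.snd)) hs⟩, hcnt⟩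
  · -- InjOn
    intro S hS S' hS' he
    obtain ⟨y, S₀, hy, rfl⟩ := src_struct hl hS.1 hS.2.1 hS.2.2
    obtain ⟨y', S₀', hy', rfl⟩ := src_struct hl hS'.1 hS'.2.1 hS'.2.2
    simp only at he
    rw [erase_penult, erase_penult] at he
    have h1 : S₀ = S₀' := by
      have := congrArg dropLast he
      simpa [dropLast_concat] using this
    have h2 : y = y' := by
      have := congrArg getLast? he
      simp [getLast?_concat, Prod.ext_iff] at this
      exact this
    rw [h1, h2]
  · -- SurjOn
    intro T hT
    obtain ⟨hCA, hN, hc⟩ := hT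
    obtain ⟨y, T₀, hy2, hyl, rfl, hnotin⟩ := tgt_struct hl hCA hc
    have hcnt : ∀ v, cntA (T₀ ++ [(l+1,1),(l+1,y)]) v = contentL2 l v := by
      intro v
      have hv := hc v
      rw [cntA_append, cntA_single] at hv
      rw [cntA_append, cntA_pair]
      simp only [contentL2]
      split_ifs at hv ⊢ <;> omega
    refine ⟨T₀ ++ [(l+1,1),(l+1,y)], ⟨⟨?_, ?_⟩, ⟨?_, ?_⟩, hcnt⟩, ?_⟩
    · intro p hp
      rcases mem_append.1 hp with h | h
      · exact hCA.1 p (mem_append_left _ h)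
      · simp only [mem_cons, not_mem_nil, or_false, mem_singleton] at h
        rcases h with rfl | rfl <;> simp <;> omega
    · refine isChain_append.2 ⟨(isChain_append.1 hCA.2).1,
        isChain_cons_cons.2 ⟨Or.inr ⟨rfl, by omega⟩, isChain_singleton _⟩, ?_⟩
      intro x hx z hz
      simp only [head?_cons, Option.mem_some_iff] at hz
      subst hz
      have hxT : x ∈ T₀ := mem_of_mem_getLast? hx
      have hx1 : x.1 ∈ T₀.map Prod.fst := mem_map.2 ⟨x, hxT, rfl⟩
      have hx1' : x.1 ∈ (T₀ ++ [(l+1,y)]).map Prod.fst := by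
        rw [map_append]; exact mem_append_left _ hx1
      have hle := mem_top_pos hx1'
      rw [hc] at hle
      have hne : x.1 ≠ l + 1 := fun h => hnotin (h ▸ hx1)
      split_ifs at hle <;> [skip; omega]
      left
      omega
    · intro v
      rw [hcnt v]
      simp only [contentL2]
      split_ifs <;> omega
    · intro t hsubt hsort
      have he1 : (T₀ ++ [((l:ℕ)+1,(1:ℕ)),(l+1,y)]).map Prod.snd = T₀.map Prod.snd ++ [1, y] := by
        simp
      rw [he1] at hsubt
      obtain ⟨t1, t2, rfl, h1, h2⟩ := sublist_append_iff.1 hsubt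
      rcases sublist_cons_iff.1 h2 with h2' | ⟨r, rfl, hr⟩
      · refine hN.2 _ ?_ hsort
        have he2 : (T₀ ++ [((l:ℕ)+1,y)]).map Prod.snd = T₀.map Prod.snd ++ [y] := by simp
        rw [he2]
        exact h1.append h2'
      · have ht1 : t1 = [] := by
          cases t1 with
          | nil => rfl
          | cons a t1' =>
            exfalso
            have haT0 : a ∈ T₀.map Prod.snd := h1.subset mem_cons_self
            have haT : a ∈ (T₀ ++ [((l:ℕ)+1,y)]).map Prod.snd := by
              rw [map_append]; exact mem_append_left _ haT0
            have h2a := mem_bot_pos haT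
            rw [hc] at h2a
            have hle1 : a ≤ 1 := (pairwise_append.1 hsort).2.2 a (by simp) 1 (by simp)
            split_ifs at h2a <;> omega
        subst ht1
        simp only [nil_append, length_cons]
        have := hr.length_le
        simp at this
        omega
    · simp only
      rw [erase_penult]

def decP (p : ℕ × ℕ) : ℕ × ℕ := (p.1 - 1, p.2 - 1)
def incP (p : ℕ × ℕ) : ℕ × ℕ := (p.1 + 1, p.2 + 1)

lemma bij2 (l : ℕ) (hl : 1 ≤ l) :
    Set.BijOn (fun S : List (ℕ × ℕ) => S.map decP)
      {S | IsCArray S ∧ IsNormal S ∧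
        (∀ v, cntA S v = if 2 ≤ v ∧ v ≤ l + 1 then 1 else 0)}
      {S | IsCArray S ∧ IsNormal S ∧
        (∀ v, cntA S v = if 1 ≤ v ∧ v ≤ l then 1 else 0)} := by
  have memlow : ∀ T : List (ℕ × ℕ),
      (∀ v, cntA T v = if 2 ≤ v ∧ v ≤ l + 1 then 1 else 0) →
      ∀ p ∈ T, 2 ≤ p.1 ∧ 2 ≤ p.2 := by
    intro T hc p hp
    have h1 := mem_top_pos (mem_map.2 ⟨p, hp, rfl⟩)
    have h2 := mem_bot_pos (mem_map.2 ⟨p, hp, rfl⟩)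
    rw [hc] at h1 h2
    split_ifs at h1 h2 <;> omega
  refine ⟨?_, ?_, ?_⟩
  · -- MapsTo
    intro T hT
    obtain ⟨⟨hba, hch⟩, hN, hc⟩ := hT
    have hlow := memlow T hc
    have htop1 : ∀ x ∈ T.map Prod.fst, 1 ≤ x := by
      intro x hx
      obtain ⟨p, hp, rfl⟩ := mem_map.1 hx
      have := (hlow p hp).1
      omega
    have hbot1 : ∀ x ∈ T.map Prod.snd, 1 ≤ x := by
      intro x hx
      obtain ⟨p, hp, rfl⟩ := mem_map.1 hx
      have := (hlow p hp).2
      omega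
    have hcnt : ∀ v, cntA (T.map decP) v = if 1 ≤ v ∧ v ≤ l then 1 else 0 := by
      intro v
      have hfst : (T.map decP).map Prod.fst = (T.map Prod.fst).map (· - 1) := by
        simp only [map_map]; rfl
      have hsnd : (T.map decP).map Prod.snd = (T.map Prod.snd).map (· - 1) := by
        simp only [map_map]; rfl
      rw [cntA_split, hfst, hsnd, count_map_sub htop1, count_map_sub hbot1]
      have hv := hc (v + 1)
      rw [cntA_split] at hv
      split_ifs at hv ⊢ <;> omega
    refine ⟨⟨?_, ?_⟩, ⟨fun v => by rw [hcnt v]; split_ifs <;> omega, ?_⟩, hcnt⟩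
    · intro p hp
      obtain ⟨q, hq, rfl⟩ := mem_map.1 hp
      have := hba q hq
      have := hlow q hq
      simp only [decP]
      omega
    · refine (isChain_map decP).2 ?_
      refine Pairwise.isChain ?_
      refine (isChain_iff_pairwise.1 hch).imp_of_mem ?_
      intro a b ha hb hab
      have h2a := hlow a ha
      have h2b := hlow b hb
      simp only [decP]
      omega
    · intro t ht hs
      have ht' : t <+ (T.map Prod.snd).map (· - 1) := by
        have e : (T.map decP).map Prod.snd = (T.map Prod.snd).map (· - 1) := by
          simp only [map_map]; rfl
        rw [← e]; exact ht
      obtain ⟨s, hsub, rfl⟩ := sublist_map_iff.1 ht'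
      have hs1 : ∀ x ∈ s, 1 ≤ x := fun x hx => hbot1 x (hsub.subset hx)
      have hssorted : s.Pairwise (· ≤ ·) := by
        refine (pairwise_map.1 hs).imp_of_mem ?_
        intro a b ha hb hab
        have := hs1 a ha
        have := hs1 b hb
        omega
      have := hN.2 s hsub hssorted
      simpa using this
  · -- InjOn
    intro T hT T' hT' he
    have inv : ∀ U : List (ℕ × ℕ), (∀ p ∈ U, 2 ≤ p.1 ∧ 2 ≤ p.2) →
        (U.map decP).map incP = U := by
      intro U hU
      rw [map_map]
      refine (List.map_congr_left ?_).trans (map_id U)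
      intro p hp
      have := hU p hp
      simp only [Function.comp_apply, decP, incP, id]
      refine Prod.ext ?_ ?_ <;> simp <;> omega
    have h1 := inv T (memlow T hT.2.2)
    have h2 := inv T' (memlow T' hT'.2.2)
    simp only at he
    rw [← h1, ← h2, he]
  · -- SurjOn bij2
    intro U hU
    obtain ⟨⟨hba, hch⟩, hN, hc⟩ := hU
    have hcnt : ∀ v, cntA (U.map incP) v = if 2 ≤ v ∧ v ≤ l + 1 then 1 else 0 := by
      intro v
      have e : cntA (U.map incP) v = if v = 0 then 0 else cntA U (v - 1) := by
        have hfst : (U.map incP).map Prod.fst = (U.map Prod.fst).map (· + 1) := by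
          simp only [map_map]; rfl
        have hsnd : (U.map incP).map Prod.snd = (U.map Prod.snd).map (· + 1) := by
          simp only [map_map]; rfl
        rw [cntA_split, hfst, hsnd, count_map_succ, count_map_succ, cntA_split]
        split_ifs <;> omega
      rw [e]
      rcases Nat.eq_zero_or_pos v with rfl | hv
      · simp
      · have hv' := hc (v - 1)
        rw [if_neg (by omega), hv']
        split_ifs <;> omega
    refine ⟨U.map incP, ⟨⟨?_, ?_⟩, ⟨fun v => by rw [hcnt v]; split_ifs <;> omega, ?_⟩, hcnt⟩, ?_⟩
    · intro p hp
      obtain ⟨q, hq, rfl⟩ := mem_map.1 hp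
      have := hba q hq
      simp only [incP]
      omega
    · refine (isChain_map incP).2 ?_
      refine hch.imp ?_
      intro a b hab
      simp only [incP]
      omega
    · intro t ht hs
      have ht' : t <+ (U.map Prod.snd).map (· + 1) := by
        have e : (U.map incP).map Prod.snd = (U.map Prod.snd).map (· + 1) := by
          simp only [map_map]; rfl
        rw [← e]; exact ht
      obtain ⟨s, hsub, rfl⟩ := sublist_map_iff.1 ht'
      have hssorted : s.Pairwise (· ≤ ·) := by
        refine (pairwise_map.1 hs).imp_of_mem ?_
        intro a b _ _ hab
        omega
      have := hN.2 s hsub hssorted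
      simpa using this
    · simp only
      rw [map_map]
      refine (List.map_congr_left ?_).trans (map_id U)
      intro p hp
      simp only [Function.comp_apply, decP, incP, id]
      refine Prod.ext ?_ ?_ <;> simp

/-- every normal c-array of content `(1,…,1,2)` ends with columns
`(l+1, 1), (l+1, y)`; removing the column `(l+1, 1)` gives a bijection with the
normal c-arrays of content `(0, 1, …, 1)` on `{2, …, l+1}`, and the count equals
the number of multilinear normal c-arrays on `l` values. -/
theorem normal_carray_content_ones_two (l : ℕ) (hl : 1 ≤ l) :
    (∀ S : List (ℕ × ℕ),
      IsCArray S ∧ IsNormal S ∧ (∀ v, cntA S v = contentL2 l v) →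
      ∃ y : ℕ, ∃ S₀ : List (ℕ × ℕ), S = S₀ ++ [(l + 1, 1), (l + 1, y)]) ∧
    Set.BijOn (fun S : List (ℕ × ℕ) => S.eraseIdx (S.length - 2))
      {S | IsCArray S ∧ IsNormal S ∧ (∀ v, cntA S v = contentL2 l v)}
      {S | IsCArray S ∧ IsNormal S ∧
        (∀ v, cntA S v = if 2 ≤ v ∧ v ≤ l + 1 then 1 else 0)} ∧
    Nat.card {S : List (ℕ × ℕ) // IsCArray S ∧ IsNormal S ∧
        (∀ v, cntA S v = contentL2 l v)} =
    Nat.card {S : List (ℕ × ℕ) // IsCArray S ∧ IsNormal S ∧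
        (∀ v, cntA S v = if 1 ≤ v ∧ v ≤ l then 1 else 0)} := by
  refine ⟨fun S hS => ?_, bij1 l hl, ?_⟩
  · obtain ⟨y, S₀, _, rfl⟩ := src_struct hl hS.1 hS.2.1 hS.2.2
    exact ⟨y, S₀, rfl⟩
  · exact Nat.card_congr ((Set.BijOn.equiv _ (bij1 l hl)).trans
      (Set.BijOn.equiv _ (bij2 l hl)))
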